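/- Equivalence of positivity: Let μ be a measure preserved by a measurable bijection θ and B ∈ 𝒜. Then the following are equivalent: (a) μ(B) > 0; (b) μ({T_B < ∞}) > 0; (c) μ({T̃_B < ∞}) > 0. -/

import Mathlib

open MeasureTheory
open scoped ENNReal Classical
noncomputable section

/-- First hitting time `inf {n ≥ 1 : θ^n ω ∈ B}` valued in `ℕ∞` (`⊤` if never). -/
def hitT {Ω : Type*} (θ : Ω → Ω) (B : Set Ω) (ω : Ω) : ℕ∞ :=
  ⨅ (n : ℕ) (_ : 0 < n ∧ θ^[n] ω ∈ B), (n : ℕ∞)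

/-- Number of visits to `A` strictly before the hitting time of `B` (in `[0,∞]`). -/
def countM {Ω : Type*} (θ : Ω → Ω) (B A : Set Ω) (ω : Ω) : ℝ≥0∞ :=
  ∑' n : ℕ, if (n : ℕ∞) < hitT θ B ω ∧ θ^[n] ω ∈ A then 1 else 0

lemma hitT_lt_top_iff {Ω : Type*} (f : Ω → Ω) (B : Set Ω) (ω : Ω) :
    hitT f B ω < ⊤ ↔ ∃ n : ℕ, 0 < n ∧ f^[n] ω ∈ B := by
  constructor
  · intro h
    by_contra hc
    push_neg at hc
    have : hitT f B ω = ⊤ := by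
      simp only [hitT, iInf_eq_top]
      intro n hn
      exact absurd hn.2 (hc n hn.1)
    simp [this] at h
  · rintro ⟨n, hn, hmem⟩
    have : hitT f B ω ≤ (n : ℕ∞) := iInf₂_le n ⟨hn, hmem⟩
    exact lt_of_le_of_lt this (by simp [lt_top_iff_ne_top])

lemma aux_pos {Ω : Type*} [MeasurableSpace Ω] (f : Ω → Ω) (hf : Measurable f)
    (μ : Measure Ω) (hinv : ∀ A : Set Ω, MeasurableSet A → μ (f ⁻¹' A) = μ A)
    (B : Set Ω) (hB : MeasurableSet B) :
    0 < μ B ↔ 0 < μ {ω | hitT f B ω < ⊤} := by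
  have hiter : ∀ n : ℕ, μ ((f^[n]) ⁻¹' B) = μ B := by
    intro n
    induction n with
    | zero => simp
    | succ k ih =>
      have : (f^[k + 1]) ⁻¹' B = f ⁻¹' ((f^[k]) ⁻¹' B) := by
        rw [Function.iterate_succ, Set.preimage_comp]
      rw [this, hinv _ ((hf.iterate k) hB), ih]
  have hset : {ω | hitT f B ω < ⊤} = ⋃ n : ℕ, (f^[n + 1]) ⁻¹' B := by
    ext ω
    simp only [Set.mem_setOf_eq, hitT_lt_top_iff, Set.mem_iUnion, Set.mem_preimage]
    constructor
    · rintro ⟨n, hn, hm⟩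
      exact ⟨n - 1, by rwa [Nat.sub_add_cancel hn]⟩
    · rintro ⟨n, hm⟩
      exact ⟨n + 1, Nat.succ_pos n, hm⟩
  constructor
  · intro h
    have hsub : (f^[1]) ⁻¹' B ⊆ {ω | hitT f B ω < ⊤} := by
      rw [hset]; exact Set.subset_iUnion (fun n => (f^[n + 1]) ⁻¹' B) 0
    calc (0 : ℝ≥0∞) < μ B := h
      _ = μ ((f^[1]) ⁻¹' B) := (hiter 1).symm
      _ ≤ μ {ω | hitT f B ω < ⊤} := measure_mono hsub
  · intro h
    by_contra hc
    push_neg at hc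
    have hB0 : μ B = 0 := le_antisymm hc zero_le
    have : μ {ω | hitT f B ω < ⊤} = 0 := by
      rw [hset]
      refine le_antisymm (le_trans (measure_iUnion_le _) ?_) zero_le
      have h0 : ∀ i : ℕ, μ ((f^[i] ∘ f) ⁻¹' B) = 0 := by
        intro i
        rw [← Function.iterate_succ]
        exact (hiter (i + 1)).trans hB0
      simp [h0]
    simp [this] at h

/-- Equivalence of positivity: `μ(B) > 0 ↔ μ(T_B < ∞) > 0 ↔ μ(T̃_B < ∞) > 0`. -/
theorem positivity_equivalence {Ω : Type*} [MeasurableSpace Ω]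
    (θ : Ω ≃ Ω) (hθ : Measurable θ) (hθ' : Measurable θ.symm)
    (μ : Measure Ω) (hinv : ∀ A : Set Ω, MeasurableSet A → μ (⇑θ ⁻¹' A) = μ A)
    (B : Set Ω) (hB : MeasurableSet B) :
    (0 < μ B ↔ 0 < μ {ω | hitT (⇑θ) B ω < ⊤}) ∧
    (0 < μ B ↔ 0 < μ {ω | hitT (⇑θ.symm) B ω < ⊤}) := by
  have hinv' : ∀ A : Set Ω, MeasurableSet A → μ (⇑θ.symm ⁻¹' A) = μ A := by
    intro A hA
    have := hinv (⇑θ.symm ⁻¹' A) (hθ' hA)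
    rw [show ⇑θ ⁻¹' (⇑θ.symm ⁻¹' A) = A by ext x; simp] at this
    exact this.symm
  exact ⟨aux_pos θ hθ μ hinv B hB, aux_pos θ.symm hθ' μ hinv' B hB⟩
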